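/- arXiv:1307.3107 — 4 statements merged into one kernel-verified Lean document; each statement's English description precedes it below -/
import Mathlib

section
/- Let q be a prime power and J ⊆ F_q[X_1,...,X_m] an ideal containing the field equations X_1^q − X_1, ..., X_m^q − X_m. Then the evaluation map sending a coset A + J to the vector of values (A(P_1), ..., A(P_n)), where {P_1,...,P_n} is the set of common zeros of J in F_q^m, is a well-defined injective F_q-linear map from F_q[X_1,...,X_m]/J to F_q^n. -/
open MvPolynomial

namespace StmtAux

/-- reduce an exponent modulo the relation `e ~ e + (q-1)` for `e ≥ 1`. -/
def red (q e : ℕ) : ℕ := if e = 0 then 0 else (e - 1) % (q - 1) + 1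

lemma red_zero (q : ℕ) : red q 0 = 0 := rfl

lemma red_le {q : ℕ} (hq : 2 ≤ q) (e : ℕ) : red q e ≤ q - 1 := by
  unfold red
  split
  · omega
  · have := Nat.mod_lt (e - 1) (show 0 < q - 1 by omega)
    omega

universe u

variable {m : ℕ} {F : Type u} [Field F] [Fintype F]

lemma pow_red_mem {q : ℕ} (hq : 2 ≤ q) (J : Ideal (MvPolynomial (Fin m) F))
    (i : Fin m) (hJi : (X i : MvPolynomial (Fin m) F) ^ q - X i ∈ J) (e : ℕ) :
    (X i : MvPolynomial (Fin m) F) ^ e - X i ^ red q e ∈ J := by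
  induction e using Nat.strong_induction_on with
  | _ e ih =>
    rcases Nat.eq_zero_or_pos e with rfl | he
    · simp [red_zero]
    by_cases hle : e ≤ q - 1
    · have hre : red q e = e := by
        have h := Nat.mod_eq_of_lt (show e - 1 < q - 1 by omega)
        unfold red
        rw [if_neg (by omega : e ≠ 0), h]
        omega
      simp [hre]
    · have heq : e - 1 ≥ q - 1 := by omega
      have hred : red q e = red q (e - (q - 1)) := by
        unfold red
        have h1 : e - (q - 1) ≠ 0 := by omega
        have : (e - 1) % (q - 1) = (e - 1 - (q - 1)) % (q - 1) := by
          conv_lhs => rw [← Nat.sub_add_cancel heq]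
          rw [Nat.add_mod_right]
        simp only [if_neg (by omega : e ≠ 0), if_neg h1]
        rw [this]
        congr 2
        omega
      have key : (X i : MvPolynomial (Fin m) F) ^ e - X i ^ (e - (q - 1)) =
          X i ^ (e - q) * (X i ^ q - X i) := by
        rw [mul_sub, ← pow_add, ← pow_succ]
        congr 2 <;> omega
      have h1 : (X i : MvPolynomial (Fin m) F) ^ e - X i ^ (e - (q - 1)) ∈ J := by
        rw [key]; exact Ideal.mul_mem_left _ _ hJi
      have h2 := ih (e - (q - 1)) (by omega)
      rw [hred]
      have := J.add_mem h1 h2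
      simpa using this

set_option linter.unusedSectionVars false

lemma prod_sub_prod_mem (J : Ideal (MvPolynomial (Fin m) F))
    (f g : Fin m → MvPolynomial (Fin m) F) (h : ∀ i, f i - g i ∈ J) :
    (∏ i, f i) - ∏ i, g i ∈ J := by
  classical
  induction (Finset.univ : Finset (Fin m)) using Finset.induction with
  | empty => simp
  | insert _ _ hx ih =>
    rename_i a s
    rw [Finset.prod_insert hx, Finset.prod_insert hx]
    have key : f a * ∏ i ∈ s, f i - g a * ∏ i ∈ s, g i =
        f a * ((∏ i ∈ s, f i) - ∏ i ∈ s, g i) + (f a - g a) * ∏ i ∈ s, g i := by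
      ring
    rw [key]
    exact J.add_mem (Ideal.mul_mem_left _ _ ih) (Ideal.mul_mem_right _ _ (h a))

lemma monomial_red_mem {q : ℕ} (hq : 2 ≤ q) (J : Ideal (MvPolynomial (Fin m) F))
    (hJ : ∀ i : Fin m, (X i : MvPolynomial (Fin m) F) ^ q - X i ∈ J)
    (d : Fin m →₀ ℕ) (c : F) :
    (monomial d c : MvPolynomial (Fin m) F) -
      monomial (d.mapRange (red q) (red_zero q)) c ∈ J := by
  rw [monomial_eq, monomial_eq,
    Finsupp.prod_fintype _ _ (fun i => pow_zero _),
    Finsupp.prod_fintype _ _ (fun i => pow_zero _), ← mul_sub]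
  refine Ideal.mul_mem_left _ _ ?_
  refine prod_sub_prod_mem J _ _ fun i => ?_
  rw [Finsupp.mapRange_apply]
  exact pow_red_mem hq J i (hJ i) (d i)

lemma exists_reduced {q : ℕ} (hq : 2 ≤ q) (J : Ideal (MvPolynomial (Fin m) F))
    (hJ : ∀ i : Fin m, (X i : MvPolynomial (Fin m) F) ^ q - X i ∈ J)
    (p : MvPolynomial (Fin m) F) :
    ∃ r ∈ restrictDegree (Fin m) F (q - 1), p - r ∈ J := by
  induction p using MvPolynomial.induction_on' with
  | monomial d c =>
    refine ⟨monomial (d.mapRange (red q) (red_zero q)) c, ?_, monomial_red_mem hq J hJ d c⟩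
    rw [mem_restrictDegree]
    intro s hs i
    classical
    rw [support_monomial] at hs
    by_cases hc : c = 0
    · simp [hc] at hs
    · rw [if_neg hc, Finset.mem_singleton] at hs
      subst hs
      rw [Finsupp.mapRange_apply]
      exact red_le hq _
  | add p1 p2 ih1 ih2 =>
    obtain ⟨r1, hr1, hd1⟩ := ih1
    obtain ⟨r2, hr2, hd2⟩ := ih2
    refine ⟨r1 + r2, Submodule.add_mem _ hr1 hr2, ?_⟩
    have := J.add_mem hd1 hd2
    simpa [sub_add_sub_comm] using this

/-- elements of the field-equation ideal vanish everywhere -/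
lemma eval_span_zero (p : MvPolynomial (Fin m) F)
    (hp : p ∈ Ideal.span (Set.range fun i : Fin m =>
      (X i : MvPolynomial (Fin m) F) ^ Fintype.card F - X i))
    (a : Fin m → F) : eval a p = 0 := by
  refine Submodule.span_induction ?_ ?_ ?_ ?_ hp
  · rintro x ⟨i, rfl⟩
    simp [FiniteField.pow_card]
  · simp
  · intro x y _ _ hx hy
    simp [hx, hy]
  · intro r x _ hx
    simp [smul_eq_mul, hx]

/-- universe-flexible version of `eq_zero_of_eval_eq_zero` -/
lemma eq_zero_restrict (p : MvPolynomial (Fin m) F)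
    (h : ∀ v : Fin m → F, eval v p = 0)
    (hp : p ∈ restrictDegree (Fin m) F (Fintype.card F - 1)) : p = 0 := by
  classical
  let e : Fin m → ULift.{u} (Fin m) := ULift.up
  have he : Function.Injective e := fun a b hab => congrArg ULift.down hab
  rw [mem_restrictDegree] at hp
  have hq0 : rename e p = 0 := by
    refine eq_zero_of_eval_eq_zero (ULift.{u} (Fin m)) F (rename e p) (fun v => ?_) ?_
    · rw [eval_rename]
      exact h _
    · rw [mem_restrictDegree]
      intro s hs i
      rw [support_rename_of_injective he, Finset.mem_image] at hs
      obtain ⟨t, ht, rfl⟩ := hs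
      have : Finsupp.mapDomain e t i = t i.down := by
        have : i = e i.down := rfl
        rw [this, Finsupp.mapDomain_apply he]
      rw [this]
      exact hp t ht i.down
  exact (map_eq_zero_iff _ (rename_injective e he)).1 hq0

/-- a polynomial vanishing everywhere lies in the field-equation ideal -/
lemma mem_span_of_eval_zero (p : MvPolynomial (Fin m) F)
    (h : ∀ a : Fin m → F, eval a p = 0) :
    p ∈ Ideal.span (Set.range fun i : Fin m =>
      (X i : MvPolynomial (Fin m) F) ^ Fintype.card F - X i) := by
  set I0 := Ideal.span (Set.range fun i : Fin m =>
      (X i : MvPolynomial (Fin m) F) ^ Fintype.card F - X i) with hI0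
  have hq : 2 ≤ Fintype.card F := Fintype.one_lt_card
  obtain ⟨r, hr, hpr⟩ := exists_reduced hq I0
    (fun i => Ideal.subset_span ⟨i, rfl⟩) p
  have hr0 : r = 0 := by
    refine eq_zero_restrict r (fun a => ?_) hr
    have := eval_span_zero (p - r) hpr a
    rw [map_sub, h a, zero_sub, neg_eq_zero] at this
    exact this
  rw [hr0, sub_zero] at hpr
  exact hpr

/-- Main lemma: if `A` vanishes on the variety of `J`, then `A ∈ J`. -/
lemma mem_of_vanishing {q : ℕ} (hcard : Fintype.card F = q)
    (J : Ideal (MvPolynomial (Fin m) F))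
    (hJ : ∀ i : Fin m, (X i : MvPolynomial (Fin m) F) ^ q - X i ∈ J)
    (A : MvPolynomial (Fin m) F)
    (hA : ∀ P : Fin m → F, (∀ B ∈ J, eval P B = 0) → eval P A = 0) : A ∈ J := by
  classical
  subst hcard
  have hI0J : Ideal.span (Set.range fun i : Fin m =>
      (X i : MvPolynomial (Fin m) F) ^ Fintype.card F - X i) ≤ J := by
    rw [Ideal.span_le]
    rintro x ⟨i, rfl⟩
    exact hJ i
  -- indicator polynomials of points off the variety are in J
  have hind : ∀ c : Fin m → F, ¬(∀ B ∈ J, eval c B = 0) → indicator c ∈ J := by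
    intro c hc
    push_neg at hc
    obtain ⟨B, hBJ, hBc⟩ := hc
    have h1 : B * indicator c - C (eval c B) * indicator c ∈ J := by
      refine hI0J (mem_span_of_eval_zero _ fun a => ?_)
      by_cases hac : a = c
      · subst hac
        simp [eval_indicator_apply_eq_one]
      · simp [eval_indicator_apply_eq_zero a c hac]
    have h2 : C (eval c B) * indicator c ∈ J := by
      have := J.sub_mem (Ideal.mul_mem_right (indicator c) J hBJ) h1
      simpa using this
    have h3 := Ideal.mul_mem_left J (C (eval c B)⁻¹) h2
    rwa [← mul_assoc, ← C_mul, inv_mul_cancel₀ hBc, C_1, one_mul] at h3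
  -- decompose A
  have hdec : A - ∑ c : Fin m → F, C (eval c A) * indicator c ∈ J := by
    refine hI0J (mem_span_of_eval_zero _ fun a => ?_)
    rw [map_sub, map_sum]
    have : ∑ c : Fin m → F, eval a (C (eval c A) * indicator c) = eval a A := by
      rw [Finset.sum_eq_single a]
      · simp [eval_indicator_apply_eq_one]
      · intro b _ hb
        simp [eval_indicator_apply_eq_zero a b (Ne.symm hb)]
      · simp
    rw [this, sub_self]
  have hsum : ∑ c : Fin m → F, C (eval c A) * indicator c ∈ J := by
    refine Ideal.sum_mem _ fun c _ => ?_
    by_cases hc : ∀ B ∈ J, eval c B = 0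
    · rw [hA c hc, map_zero, zero_mul]
      exact J.zero_mem
    · exact Ideal.mul_mem_left _ _ (hind c hc)
  have := J.add_mem hdec hsum
  simpa using this

end StmtAux

/-- The evaluation map on the quotient by an ideal containing the field equations is a
well-defined injective linear map to functions on the variety. -/
theorem stmt_0 (q m : ℕ) (hq : IsPrimePow q) (F : Type*) [Field F] [Fintype F]
    (hcard : Fintype.card F = q) (J : Ideal (MvPolynomial (Fin m) F))
    (hJ : ∀ i : Fin m, (X i : MvPolynomial (Fin m) F) ^ q - X i ∈ J) :
    ∃ ev : (MvPolynomial (Fin m) F ⧸ J) →ₗ[F]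
      ({P : Fin m → F // ∀ B ∈ J, eval P B = 0} → F),
      Function.Injective ev ∧
      ∀ (A : MvPolynomial (Fin m) F) (P : {P : Fin m → F // ∀ B ∈ J, eval P B = 0}),
        ev (Ideal.Quotient.mk J A) P = eval P.1 A := by
  classical
  let evf : (MvPolynomial (Fin m) F ⧸ J) →
      ({P : Fin m → F // ∀ B ∈ J, eval P B = 0} → F) :=
    fun a P => Ideal.Quotient.lift J (eval P.1) (fun B hB => P.2 B hB) a
  have hmk : ∀ (A : MvPolynomial (Fin m) F)
      (P : {P : Fin m → F // ∀ B ∈ J, eval P B = 0}),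
      evf (Ideal.Quotient.mk J A) P = eval P.1 A := by
    intro A P
    simp [evf]
  refine ⟨⟨⟨evf, ?_⟩, ?_⟩, ?_, hmk⟩
  · intro a b
    funext P
    show Ideal.Quotient.lift J (eval P.1) (fun B hB => P.2 B hB) (a + b) =
      Ideal.Quotient.lift J (eval P.1) (fun B hB => P.2 B hB) a +
      Ideal.Quotient.lift J (eval P.1) (fun B hB => P.2 B hB) b
    exact (Ideal.Quotient.lift J (eval P.1) (fun B hB => P.2 B hB)).map_add a b
  · intro c a
    obtain ⟨A, rfl⟩ := Ideal.Quotient.mk_surjective a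
    funext P
    have hsm : Ideal.Quotient.mk J (c • A) = c • Ideal.Quotient.mk J A := by
      rw [← Ideal.Quotient.mkₐ_eq_mk F J]
      exact map_smul (Ideal.Quotient.mkₐ F J).toLinearMap c A
    show evf (c • Ideal.Quotient.mk J A) P = c • evf (Ideal.Quotient.mk J A) P
    rw [← hsm, hmk, hmk, smul_eq_C_mul, map_mul, eval_C, smul_eq_mul]
  · intro a b hab
    obtain ⟨A, rfl⟩ := Ideal.Quotient.mk_surjective a
    obtain ⟨B, rfl⟩ := Ideal.Quotient.mk_surjective b
    rw [Ideal.Quotient.mk_eq_mk_iff_sub_mem]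
    refine StmtAux.mem_of_vanishing hcard J hJ (A - B) fun P hP => ?_
    have h1 := hmk A ⟨P, hP⟩
    have h2 := hmk B ⟨P, hP⟩
    have hthis : evf (Ideal.Quotient.mk J A) ⟨P, hP⟩ = evf (Ideal.Quotient.mk J B) ⟨P, hP⟩ :=
      congrFun hab ⟨P, hP⟩
    rw [h1, h2] at hthis
    rw [map_sub, hthis, sub_self]
end

section
/- Let k be a field, J ⊆ k[X_1,...,X_m] an ideal, and ≺ a monomial ordering. Then the set of cosets {M + J : M ∈ Δ_≺(J)} forms a basis of the quotient ring k[X_1,...,X_m]/J as a vector space over k. -/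
open MvPolynomial

/-- The leading monomial (multidegree) of a multivariate polynomial with respect to a
monomial order. -/
noncomputable def lmDeg {σ : Type*} {F : Type*} [CommSemiring F]
    (ord : MonomialOrder σ) (f : MvPolynomial σ F) : σ →₀ ℕ :=
  ord.toSyn.symm (f.support.sup ord.toSyn)

section Aux

variable {σ : Type*} {F : Type*} [CommSemiring F] (ord : MonomialOrder σ)

lemma toSyn_lmDeg (f : MvPolynomial σ F) :
    ord.toSyn (lmDeg ord f) = f.support.sup ord.toSyn :=
  ord.toSyn.apply_symm_apply _

lemma le_lmDeg {f : MvPolynomial σ F} {μ : σ →₀ ℕ} (h : μ ∈ f.support) :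
    ord.toSyn μ ≤ ord.toSyn (lmDeg ord f) := by
  rw [toSyn_lmDeg]
  exact Finset.le_sup h

lemma lmDeg_mem_support {f : MvPolynomial σ F} (h : f ≠ 0) :
    lmDeg ord f ∈ f.support := by
  obtain ⟨μ, hμ, he⟩ :=
    Finset.exists_mem_eq_sup f.support (MvPolynomial.support_nonempty.mpr h) ord.toSyn
  have : lmDeg ord f = μ := by
    rw [lmDeg, he, AddEquiv.symm_apply_apply]
  rwa [this]

/-- If a nonzero polynomial has all monomials `≼ μ₀` and coefficient `0` at `μ₀`,
then its leading monomial is strictly smaller than `μ₀`. -/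
lemma lmDeg_lt_of {g : MvPolynomial σ F} {μ₀ : σ →₀ ℕ} (hg : g ≠ 0)
    (h0 : coeff μ₀ g = 0) (hle : ∀ ν ∈ g.support, ord.toSyn ν ≤ ord.toSyn μ₀) :
    ord.toSyn (lmDeg ord g) < ord.toSyn μ₀ := by
  have hmem := lmDeg_mem_support ord hg
  refine lt_of_le_of_ne (hle _ hmem) ?_
  intro he
  have : lmDeg ord g = μ₀ := ord.toSyn.injective he
  rw [this, MvPolynomial.mem_support_iff] at hmem
  exact hmem h0

end Aux

set_option maxHeartbeats 1000000 in
/-- The cosets of the monomials in the footprint of an ideal `J` form a basis of the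
quotient ring `k[X₁,…,Xₘ]/J` as a `k`-vector space. -/
theorem stmt_2 (k : Type*) [Field k] (m : ℕ) (J : Ideal (MvPolynomial (Fin m) k))
    (ord : MonomialOrder (Fin m)) :
    LinearIndependent k
      (fun μ : {μ : Fin m →₀ ℕ | ∀ f ∈ J, f ≠ 0 → lmDeg ord f ≠ μ} =>
        Ideal.Quotient.mk J (monomial μ.1 (1 : k))) ∧
    Submodule.span k
      (Set.range (fun μ : {μ : Fin m →₀ ℕ | ∀ f ∈ J, f ≠ 0 → lmDeg ord f ≠ μ} =>
        Ideal.Quotient.mk J (monomial μ.1 (1 : k)))) = ⊤ := by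
  classical
  set T := {μ : Fin m →₀ ℕ | ∀ f ∈ J, f ≠ 0 → lmDeg ord f ≠ μ} with hT
  set Q : MvPolynomial (Fin m) k →ₗ[k] MvPolynomial (Fin m) k ⧸ J :=
    (Ideal.Quotient.mkₐ k J).toLinearMap with hQdef
  have hQ : ∀ f : MvPolynomial (Fin m) k, Ideal.Quotient.mk J f = Q f := fun _ => rfl
  constructor
  · rw [linearIndependent_iff]
    intro l hl
    set p : MvPolynomial (Fin m) k := l.sum fun μ c => monomial μ.1 c with hp
    have hcoeff : ∀ μ₀ : T, coeff μ₀.1 p = l μ₀ := by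
      intro μ₀
      rw [hp, Finsupp.sum, coeff_sum, Finset.sum_eq_single μ₀]
      · simp [coeff_monomial]
      · intro b _ hb
        rw [coeff_monomial, if_neg fun h => hb (Subtype.ext h)]
      · intro h
        simp [coeff_monomial, Finsupp.notMem_support_iff.mp h]
    have hmk : Ideal.Quotient.mk J p = 0 := by
      rw [hp, Finsupp.sum, hQ, map_sum, ← hl]
      rw [Finsupp.linearCombination_apply, Finsupp.sum]
      refine Finset.sum_congr rfl fun μ _ => ?_
      rw [hQ (monomial μ.1 1), ← map_smul, smul_monomial, smul_eq_mul, mul_one]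
    have hpJ : p ∈ J := (Ideal.Quotient.eq_zero_iff_mem).mp hmk
    have hp0 : p = 0 := by
      by_contra h0
      have hmem := lmDeg_mem_support ord h0
      -- the support of p consists of footprint monomials
      have hsupp : ∀ ν ∈ p.support, ν ∈ T := by
        intro ν hν
        rw [MvPolynomial.mem_support_iff] at hν
        by_contra hc
        apply hν
        rw [hp, Finsupp.sum, coeff_sum]
        refine Finset.sum_eq_zero fun b _ => ?_
        rw [coeff_monomial, if_neg]
        intro h
        exact hc (h ▸ b.2)
      exact (hsupp _ hmem) p hpJ h0 rfl
    ext μ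
    rw [← hcoeff μ, hp0]
    simp
  · rw [eq_top_iff]
    rintro x -
    obtain ⟨f, rfl⟩ := Ideal.Quotient.mk_surjective x
    set S := Set.range (fun μ : T => Ideal.Quotient.mk J (monomial μ.1 (1 : k))) with hS
    -- well-founded induction on the leading monomial
    have key : ∀ (s : ord.syn) (f : MvPolynomial (Fin m) k),
        ord.toSyn (lmDeg ord f) = s → Ideal.Quotient.mk J f ∈ Submodule.span k S := by
      intro s
      induction s using WellFoundedLT.induction with
      | _ s IH =>
        intro f hf
        by_cases hf0 : f = 0
        · rw [hf0, map_zero]; exact Submodule.zero_mem _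
        set μ := lmDeg ord f with hμ
        set c := coeff μ f with hc
        have hc0 : c ≠ 0 := by
          rw [hc]
          exact MvPolynomial.mem_support_iff.mp (lmDeg_mem_support ord hf0)
        by_cases hμT : μ ∈ T
        · -- subtract the leading monomial, which is in the footprint
          set g := f - monomial μ c with hg
          have hfg : f = g + monomial μ c := by rw [hg]; ring
          have hmono : Ideal.Quotient.mk J (monomial μ c) ∈ Submodule.span k S := by
            have : (monomial μ c : MvPolynomial (Fin m) k) = c • monomial μ 1 := by
              rw [smul_monomial, smul_eq_mul, mul_one]
            rw [this, hQ, map_smul, ← hQ]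
            exact Submodule.smul_mem _ _
              (Submodule.subset_span ⟨⟨μ, hμT⟩, rfl⟩)
          by_cases hg0 : g = 0
          · rw [hfg, hg0, zero_add]; exact hmono
          · have hglt : ord.toSyn (lmDeg ord g) < s := by
              rw [← hf]
              apply lmDeg_lt_of ord hg0
              · rw [hg]
                simp [coeff_monomial, hc]
              · intro ν hν
                rw [MvPolynomial.mem_support_iff, hg, MvPolynomial.coeff_sub,
                  coeff_monomial] at hν
                by_cases hνμ : ν = μ
                · rw [hνμ]
                · apply le_lmDeg ord
                  rw [MvPolynomial.mem_support_iff]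
                  intro h
                  rw [h, if_neg (fun h' => hνμ h'.symm), sub_zero] at hν
                  exact hν rfl
            rw [hfg, hQ, map_add, ← hQ, ← hQ]
            exact Submodule.add_mem _ (IH _ hglt g rfl) hmono
        · -- reduce by an element of J with the same leading monomial
          simp only [hT, Set.mem_setOf_eq, not_forall] at hμT
          obtain ⟨h, hhJ, hh0, hlm⟩ := hμT
          rw [not_not] at hlm
          set d := coeff μ h with hd
          have hd0 : d ≠ 0 := by
            rw [hd, ← hlm]
            exact MvPolynomial.mem_support_iff.mp (lmDeg_mem_support ord hh0)
          set g := f - (c / d) • h with hg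
          have hmkeq : Ideal.Quotient.mk J f = Ideal.Quotient.mk J g := by
            rw [hQ g, hQ f, hg, map_sub, map_smul, ← hQ h,
              Ideal.Quotient.eq_zero_iff_mem.mpr hhJ, smul_zero, sub_zero]
          by_cases hg0 : g = 0
          · rw [hmkeq, hg0, map_zero]; exact Submodule.zero_mem _
          · have hglt : ord.toSyn (lmDeg ord g) < s := by
              rw [← hf]
              apply lmDeg_lt_of ord hg0
              · rw [hg, MvPolynomial.coeff_sub, MvPolynomial.coeff_smul, ← hd, ← hc,
                  smul_eq_mul, div_mul_cancel₀ c hd0, sub_self]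
              · intro ν hν
                rw [MvPolynomial.mem_support_iff, hg, MvPolynomial.coeff_sub,
                  MvPolynomial.coeff_smul] at hν
                rcases ne_or_eq (coeff ν f) 0 with h1 | h1
                · exact le_lmDeg ord (MvPolynomial.mem_support_iff.mpr h1)
                · have h2 : coeff ν h ≠ 0 := by
                    intro h2
                    rw [h1, h2, smul_zero, sub_zero] at hν
                    exact hν rfl
                  have := le_lmDeg ord (f := h) (MvPolynomial.mem_support_iff.mpr h2)
                  rwa [hlm] at this
            rw [hmkeq]
            exact IH _ hglt g rfl
    exact key _ f rfl
end

section
/- Let q be a prime power, a < b positive integers with a ≤ q, and F(X,Y) = X^a + αY^b + R(X,Y) ∈ F_q[X,Y] with α ≠ 0, where every monomial of R has weighted degree less than ab/gcd(a,b) under the weights w(X) = b/gcd(a,b), w(Y) = a/gcd(a,b). If F has exactly aq zeros in F_q^2, then {F(X,Y), Y^q − Y} is a Gröbner basis for the ideal ⟨F, X^q − X, Y^q − Y⟩ with respect to the weighted degree lexicographic ordering ≺_w (with ties broken by lex with Y ≺ X), and the footprint equals {X^{i}Y^{j} : 0 ≤ i < a, 0 ≤ j < q}. -/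
open MvPolynomial

namespace StmtAux

variable {σ : Type*} {K : Type*} [CommSemiring K] (m : MonomialOrder σ)

lemma toSyn_lmDeg (f : MvPolynomial σ K) :
    m.toSyn (lmDeg m f) = f.support.sup m.toSyn := by simp [lmDeg]

lemma lmDeg_mem {f : MvPolynomial σ K} (hf : f ≠ 0) : lmDeg m f ∈ f.support := by
  obtain ⟨b, hb, he⟩ := Finset.exists_mem_eq_sup f.support
    (Finset.nonempty_iff_ne_empty.mpr (mt MvPolynomial.support_eq_empty.mp hf)) m.toSyn
  have : lmDeg m f = b := by simp [lmDeg, he]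
  rwa [this]

lemma le_lmDeg {f : MvPolynomial σ K} {μ : σ →₀ ℕ} (h : μ ∈ f.support) :
    m.toSyn μ ≤ m.toSyn (lmDeg m f) := by
  rw [toSyn_lmDeg]; exact Finset.le_sup h

lemma coeff_lmDeg_ne {f : MvPolynomial σ K} (hf : f ≠ 0) :
    f.coeff (lmDeg m f) ≠ 0 := mem_support_iff.mp (lmDeg_mem m hf)

lemma lmDeg_eq_of {f : MvPolynomial σ K} {μ : σ →₀ ℕ} (h : μ ∈ f.support)
    (hmax : ∀ ν ∈ f.support, m.toSyn ν ≤ m.toSyn μ) : lmDeg m f = μ := by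
  have : f.support.sup m.toSyn = m.toSyn μ :=
    le_antisymm (Finset.sup_le hmax) (Finset.le_sup h)
  simp [lmDeg, this]

lemma lmDeg_lt_of {f : MvPolynomial σ K} {μ : σ →₀ ℕ} (hf : f ≠ 0)
    (hc : f.coeff μ = 0) (hmax : ∀ ν ∈ f.support, m.toSyn ν ≤ m.toSyn μ) :
    m.toSyn (lmDeg m f) < m.toSyn μ := by
  have h1 := lmDeg_mem m hf
  refine lt_of_le_of_ne (hmax _ h1) fun he => ?_
  have : lmDeg m f = μ := m.toSyn.injective he
  exact (mem_support_iff.mp h1) (this ▸ hc)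

lemma lmDeg_monomial_mul {K : Type*} [CommRing K] [IsDomain K]
    (m : MonomialOrder σ) {f : MvPolynomial σ K} (hf : f ≠ 0)
    (ν : σ →₀ ℕ) {c : K} (hc : c ≠ 0) :
    lmDeg m (monomial ν c * f) = ν + lmDeg m f := by
  apply lmDeg_eq_of
  · rw [mem_support_iff, coeff_monomial_mul]
    exact mul_ne_zero hc (coeff_lmDeg_ne m hf)
  · intro μ hμ
    rw [mem_support_iff, coeff_monomial_mul'] at hμ
    split_ifs at hμ with h
    · have : μ = ν + (μ - ν) := by rw [add_tsub_cancel_of_le h]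
      rw [this, map_add, map_add]
      exact add_le_add_right (le_lmDeg m (f := f) (μ := μ - ν) (mem_support_iff.mpr fun h0 => hμ (by simp [h0]))) _
    · exact absurd rfl hμ

open Classical in
/-- Division with remainder: every polynomial is congruent modulo `J` to a polynomial
supported in the footprint of `J`. -/
lemma reduce {σ K : Type*} [Field K] (m : MonomialOrder σ)
    (J : Ideal (MvPolynomial σ K)) (f : MvPolynomial σ K) :
    ∃ r : MvPolynomial σ K, f - r ∈ J ∧
      ∀ μ ∈ r.support, ∀ g ∈ J, g ≠ 0 → lmDeg m g ≠ μ := by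
  classical
  suffices H : ∀ d : m.syn, ∀ f : MvPolynomial σ K, m.toSyn (lmDeg m f) ≤ d →
      ∃ r : MvPolynomial σ K, f - r ∈ J ∧
        ∀ μ ∈ r.support, ∀ g ∈ J, g ≠ 0 → lmDeg m g ≠ μ from H _ f le_rfl
  intro d
  induction d using WellFoundedLT.induction with
  | _ d IH =>
  intro f hfd
  by_cases hf0 : f = 0
  · exact ⟨0, by simp [hf0], by simp⟩
  set μ := lmDeg m f with hμ
  have hc : f.coeff μ ≠ 0 := coeff_lmDeg_ne m hf0
  by_cases hΔ : ∃ g ∈ J, g ≠ 0 ∧ lmDeg m g = μ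
  · obtain ⟨g, hgJ, hg0, hgl⟩ := hΔ
    have hd0 : g.coeff μ ≠ 0 := hgl ▸ coeff_lmDeg_ne m hg0
    set e := f.coeff μ / g.coeff μ with he
    set f' := f - C e * g with hf'
    have hmemJ : f - f' ∈ J := by
      rw [hf']; simpa using J.smul_mem (C e) hgJ
    have hcoeff : f'.coeff μ = 0 := by
      rw [hf', coeff_sub, coeff_C_mul, he, div_mul_cancel₀ _ hd0, sub_self]
    have hsupp : ∀ ν ∈ f'.support, m.toSyn ν ≤ m.toSyn μ := by
      intro ν hν
      rw [mem_support_iff, hf', coeff_sub] at hν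
      rcases ne_or_eq (f.coeff ν) 0 with h | h
      · exact le_lmDeg m (mem_support_iff.mpr h)
      · have : g.coeff ν ≠ 0 := by
          intro h2; rw [h, coeff_C_mul, h2, mul_zero, sub_zero] at hν; exact hν rfl
        exact hgl ▸ le_lmDeg m (mem_support_iff.mpr this)
    by_cases hf'0 : f' = 0
    · exact ⟨0, by rw [sub_zero]; rw [hf'0, sub_zero] at hmemJ; exact hmemJ, by simp⟩
    · have hlt : m.toSyn (lmDeg m f') < d :=
        lt_of_lt_of_le (lmDeg_lt_of m hf'0 hcoeff hsupp) hfd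
      obtain ⟨r, hrJ, hrsupp⟩ := IH _ hlt f' le_rfl
      exact ⟨r, by have := J.add_mem hmemJ hrJ; simpa using this, hrsupp⟩
  · set f' := f - monomial μ (f.coeff μ) with hf'
    by_cases hf'0 : f' = 0
    · refine ⟨monomial μ (f.coeff μ), ?_, ?_⟩
      · rw [← hf', hf'0]; exact J.zero_mem
      · intro ν hν
        rw [support_monomial, if_neg hc] at hν
        simp only [Finset.mem_singleton] at hν
        subst hν
        push_neg at hΔ
        exact hΔ
    · have hcoeff : f'.coeff μ = 0 := by
        rw [hf', coeff_sub, coeff_monomial, if_pos rfl, sub_self]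
      have hsupp : ∀ ν ∈ f'.support, m.toSyn ν ≤ m.toSyn μ := by
        intro ν hν
        rw [mem_support_iff, hf', coeff_sub, coeff_monomial] at hν
        split_ifs at hν with h
        · exact h ▸ le_rfl
        · rw [sub_zero] at hν; exact le_lmDeg m (mem_support_iff.mpr hν)
      have hlt : m.toSyn (lmDeg m f') < d :=
        lt_of_lt_of_le (lmDeg_lt_of m hf'0 hcoeff hsupp) hfd
      obtain ⟨r, hrJ, hrsupp⟩ := IH _ hlt f' le_rfl
      refine ⟨r + monomial μ (f.coeff μ), ?_, ?_⟩
      · have : f - (r + monomial μ (f.coeff μ)) = f' - r := by rw [hf']; ring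
        rw [this]; exact hrJ
      · intro ν hν
        rcases Finset.mem_union.mp (MvPolynomial.support_add hν) with h | h
        · exact hrsupp ν h
        · rw [support_monomial, if_neg hc] at h
          simp only [Finset.mem_singleton] at h
          subst h
          push_neg at hΔ
          exact hΔ

section Spec

variable {q a b wX wY : ℕ} {K : Type*} [Field K] (ord : MonomialOrder (Fin 2))
  (hord : ∀ u v : Fin 2 →₀ ℕ, ord.toSyn u < ord.toSyn v ↔
      (u 0 * wX + u 1 * wY < v 0 * wX + v 1 * wY ∨
        (u 0 * wX + u 1 * wY = v 0 * wX + v 1 * wY ∧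
          (u 0 < v 0 ∨ (u 0 = v 0 ∧ u 1 < v 1)))))

include hord

/-- The leading monomial of `Y^q - Y` is `Y^q`. -/
lemma lm_Yq (hq : 2 ≤ q) (hwY : 0 < wY) :
    (X 1 ^ q - X 1 : MvPolynomial (Fin 2) K) ≠ 0 ∧
    lmDeg ord (X 1 ^ q - X 1 : MvPolynomial (Fin 2) K) = Finsupp.single 1 q := by
  classical
  have hqn : Finsupp.single (1 : Fin 2) q ≠ Finsupp.single 1 1 := by
    intro h
    have := DFunLike.congr_fun h (1 : Fin 2)
    simp at this; omega
  have hco : (X 1 ^ q - X 1 : MvPolynomial (Fin 2) K).coeff (Finsupp.single 1 q) = 1 := by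
    rw [coeff_sub, coeff_X_pow, if_pos rfl, coeff_X', if_neg (Ne.symm hqn), sub_zero]
  have hne : (X 1 ^ q - X 1 : MvPolynomial (Fin 2) K) ≠ 0 := by
    intro h; rw [h] at hco; simp at hco
  refine ⟨hne, ?_⟩
  apply lmDeg_eq_of
  · rw [mem_support_iff, hco]; exact one_ne_zero
  · intro ν hν
    rw [mem_support_iff, coeff_sub] at hν
    have : ν = Finsupp.single (1 : Fin 2) q ∨ ν = Finsupp.single 1 1 := by
      rcases ne_or_eq ((X 1 ^ q : MvPolynomial (Fin 2) K).coeff ν) 0 with h | h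
      · rw [coeff_X_pow] at h
        simp only [ne_eq, ite_eq_right_iff, not_forall] at h
        exact Or.inl (h.1).symm
      · rw [h, zero_sub, neg_ne_zero, coeff_X'] at hν
        split_ifs at hν with h2
        · exact Or.inr h2.symm
        · exact absurd rfl hν
    rcases this with h | h
    · exact h ▸ le_rfl
    · subst h
      refine le_of_lt ((hord _ _).mpr (Or.inl ?_))
      simp only [Finsupp.single_eq_same]
      have h1 : Finsupp.single (1 : Fin 2) 1 (0 : Fin 2) = 0 := by
        rw [Finsupp.single_eq_of_ne]; decide
      have h2 : Finsupp.single (1 : Fin 2) q (0 : Fin 2) = 0 := by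
        rw [Finsupp.single_eq_of_ne]; decide
      rw [h1, h2]
      simp only [zero_mul, zero_add]
      exact Nat.mul_lt_mul_of_lt_of_le (by omega) le_rfl hwY

/-- The leading monomial of a generalised `C_ab` polynomial is `X^a`. -/
lemma lm_F (ha : 0 < a) (hw : a * wX = b * wY)
    {α : K} {R : MvPolynomial (Fin 2) K}
    (hR : ∀ μ ∈ R.support, μ 0 * wX + μ 1 * wY < a * wX) :
    (X 0 ^ a + C α * X 1 ^ b + R : MvPolynomial (Fin 2) K) ≠ 0 ∧
    lmDeg ord (X 0 ^ a + C α * X 1 ^ b + R) = Finsupp.single 0 a := by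
  classical
  have e00 : Finsupp.single (0 : Fin 2) a (0 : Fin 2) = a := Finsupp.single_eq_same
  have e01 : Finsupp.single (0 : Fin 2) a (1 : Fin 2) = 0 := by
    rw [Finsupp.single_eq_of_ne]; decide
  have e10 : Finsupp.single (1 : Fin 2) b (0 : Fin 2) = 0 := by
    rw [Finsupp.single_eq_of_ne]; decide
  have e11 : Finsupp.single (1 : Fin 2) b (1 : Fin 2) = b := Finsupp.single_eq_same
  have hne : Finsupp.single (1 : Fin 2) b ≠ Finsupp.single 0 a := by
    intro h
    have := DFunLike.congr_fun h (0 : Fin 2)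
    rw [e10, e00] at this; omega
  have hRa : R.coeff (Finsupp.single 0 a) = 0 := by
    by_contra h
    have := hR _ (mem_support_iff.mpr h)
    rw [e00, e01] at this; omega
  have hco : (X 0 ^ a + C α * X 1 ^ b + R : MvPolynomial (Fin 2) K).coeff
      (Finsupp.single 0 a) = 1 := by
    rw [coeff_add, coeff_add, coeff_X_pow, if_pos rfl, coeff_C_mul, coeff_X_pow,
      if_neg hne, hRa, mul_zero, add_zero, add_zero]
  have hne0 : (X 0 ^ a + C α * X 1 ^ b + R : MvPolynomial (Fin 2) K) ≠ 0 := by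
    intro h; rw [h] at hco; simp at hco
  refine ⟨hne0, ?_⟩
  apply lmDeg_eq_of
  · rw [mem_support_iff, hco]; exact one_ne_zero
  · intro ν hν
    rw [mem_support_iff, coeff_add, coeff_add] at hν
    have hcases : ν = Finsupp.single (0 : Fin 2) a ∨ ν = Finsupp.single 1 b ∨
        ν ∈ R.support := by
      by_contra hcon
      push_neg at hcon
      obtain ⟨h1, h2, h3⟩ := hcon
      rw [mem_support_iff, not_not] at h3
      rw [coeff_X_pow, if_neg (fun h => h1 h.symm), coeff_C_mul, coeff_X_pow,
        if_neg (fun h => h2 h.symm), mul_zero, h3] at hν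
      simp at hν
    rcases hcases with h | h | h
    · exact h ▸ le_rfl
    · subst h
      refine le_of_lt ((hord _ _).mpr (Or.inr ⟨?_, Or.inl ?_⟩))
      · rw [e00, e01, e10, e11]; omega
      · rw [e00, e10]; omega
    · refine le_of_lt ((hord _ _).mpr (Or.inl ?_))
      rw [e00, e01, zero_mul, add_zero]
      exact hR _ h

end Spec

lemma boxmem {a q : ℕ} (μ : Fin 2 →₀ ℕ) (h0 : μ 0 < a) (h1 : μ 1 < q) :
    μ ∈ ((Finset.range a) ×ˢ (Finset.range q)).image
      (fun p => Finsupp.single (0 : Fin 2) p.1 + Finsupp.single 1 p.2) := by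
  rw [Finset.mem_image]
  refine ⟨(μ 0, μ 1), by simp [Finset.mem_product, h0, h1], ?_⟩
  ext i
  fin_cases i <;> simp

/-- Interpolation: every function on a finite set of points is given by a polynomial. -/
lemma interp {K : Type*} [Field K] [Fintype K] {q : ℕ} (hcard : Fintype.card K = q)
    (hq : 2 ≤ q) (V : Set (Fin 2 → K)) [Fintype V] (v : V → K) :
    ∃ f : MvPolynomial (Fin 2) K, ∀ P : V, eval (P : Fin 2 → K) f = v P := by
  classical
  refine ⟨∑ p : V, C (v p) * ∏ i, (1 - (X i - C ((p : Fin 2 → K) i)) ^ (q - 1)), fun P => ?_⟩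
  rw [map_sum]
  rw [Finset.sum_eq_single P]
  · simp only [map_mul, eval_C, map_prod, map_sub, map_one, map_pow, eval_X]
    have : ∀ i : Fin 2, (1 - ((P : Fin 2 → K) i - (P : Fin 2 → K) i) ^ (q - 1)) = 1 := by
      intro i
      rw [sub_self, zero_pow (by omega), sub_zero]
    rw [Finset.prod_congr rfl (fun i _ => this i), Finset.prod_const_one, mul_one]
  · intro p _ hne
    have : ∃ i, (P : Fin 2 → K) i ≠ (p : Fin 2 → K) i := by
      by_contra h
      push_neg at h
      exact hne (Subtype.ext (funext h).symm)
    obtain ⟨i, hi⟩ := this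
    simp only [map_mul, eval_C, map_prod, map_sub, map_one, map_pow, eval_X]
    rw [Finset.prod_eq_zero (Finset.mem_univ i), mul_zero]
    rw [← hcard, FiniteField.pow_card_sub_one_eq_one _ (sub_ne_zero_of_ne hi), sub_self]
  · intro h
    exact absurd (Finset.mem_univ P) h

/-- The footprint bound: no nonzero element of `J` can have its leading monomial inside
the box `{X^i Y^j : i < a, j < q}`. -/
lemma key {K : Type*} [Field K] [Fintype K] {q a : ℕ} (hcard : Fintype.card K = q)
    (hq : 2 ≤ q) (ha : 0 < a) (ord : MonomialOrder (Fin 2))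
    (J : Ideal (MvPolynomial (Fin 2) K))
    (hwit : ∀ μ : Fin 2 →₀ ℕ, (a ≤ μ 0 ∨ q ≤ μ 1) → ∃ g ∈ J, g ≠ 0 ∧ lmDeg ord g = μ)
    (V : Set (Fin 2 → K)) (hvan : ∀ g ∈ J, ∀ P ∈ V, eval P g = 0)
    (hV : Set.ncard V = a * q)
    {f0 : MvPolynomial (Fin 2) K} (hf0J : f0 ∈ J) (hf00 : f0 ≠ 0)
    (hb0 : lmDeg ord f0 0 < a) (hb1 : lmDeg ord f0 1 < q) : False := by
  classical
  haveI : Fintype V := (Set.toFinite V).fintype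
  have hcardV : Fintype.card V = a * q := by
    rw [← hV, Set.ncard_eq_toFinset_card']
    simp
  set Bfin : Finset (Fin 2 →₀ ℕ) := ((Finset.range a) ×ˢ (Finset.range q)).image
      (fun p => Finsupp.single (0 : Fin 2) p.1 + Finsupp.single 1 p.2) with hBfin
  have hcardB : Bfin.card = a * q := by
    rw [hBfin, Finset.card_image_of_injOn, Finset.card_product, Finset.card_range,
      Finset.card_range]
    intro p _ p' _ h
    have h0 := DFunLike.congr_fun h (0 : Fin 2)
    have h1 := DFunLike.congr_fun h (1 : Fin 2)
    simp only [Finsupp.add_apply, Finsupp.single_eq_same] at h0 h1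
    rw [Finsupp.single_eq_of_ne (by decide), Finsupp.single_eq_of_ne (by decide)] at h0
    rw [Finsupp.single_eq_of_ne (by decide), Finsupp.single_eq_of_ne (by decide)] at h1
    exact Prod.ext (by omega) (by omega)
  set Δ' : Finset (Fin 2 →₀ ℕ) := Bfin.erase (lmDeg ord f0) with hΔ'
  have hcardΔ : Δ'.card = a * q - 1 := by
    rw [hΔ', Finset.card_erase_of_mem (boxmem _ hb0 hb1), hcardB]
  set e : (Fin 2 →₀ ℕ) → (V → K) :=
    fun μ => fun P => eval (P : Fin 2 → K) (monomial μ 1) with he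
  set T : Finset (V → K) := Δ'.image e with hT
  have hspan : Submodule.span K (T : Set (V → K)) = ⊤ := by
    rw [eq_top_iff]
    rintro v -
    obtain ⟨f, hf⟩ := interp hcard hq V v
    obtain ⟨r, hrJ, hr⟩ := reduce ord J f
    have hvr : ∀ P : V, eval (P : Fin 2 → K) r = v P := by
      intro P
      have h1 : eval (P : Fin 2 → K) (f - r) = 0 := hvan _ hrJ _ P.2
      rw [map_sub, sub_eq_zero] at h1
      rw [← h1, hf]
    have hveq : v = ∑ μ ∈ r.support, r.coeff μ • e μ := by
      funext P
      rw [← hvr P]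
      conv_lhs => rw [r.as_sum]
      rw [map_sum, Finset.sum_apply]
      refine Finset.sum_congr rfl fun μ hμ => ?_
      rw [Pi.smul_apply, he, smul_eq_mul]
      have : monomial μ (r.coeff μ) = C (r.coeff μ) * monomial μ 1 := by
        rw [C_mul_monomial, mul_one]
      rw [this, map_mul, eval_C]
    rw [hveq]
    refine Submodule.sum_mem _ fun μ hμ => Submodule.smul_mem _ _ (Submodule.subset_span ?_)
    rw [hT, Finset.coe_image]
    refine Set.mem_image_of_mem e ?_
    rw [hΔ', Finset.coe_erase, Set.mem_diff]
    constructor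
    · by_contra hnB
      have : a ≤ μ 0 ∨ q ≤ μ 1 := by
        by_contra hcon
        push_neg at hcon
        exact hnB (boxmem μ hcon.1 hcon.2)
      obtain ⟨g, hgJ, hg0, hgl⟩ := hwit μ this
      exact hr μ hμ g hgJ hg0 hgl
    · simp only [Set.mem_singleton_iff]
      exact fun h => hr μ hμ f0 hf0J hf00 h.symm
  have hrank : a * q ≤ a * q - 1 := by
    calc a * q = Module.finrank K (V → K) := by rw [Module.finrank_pi, hcardV]
    _ = Module.finrank K ↥(Submodule.span K (T : Set (V → K))) := by
        rw [hspan, finrank_top]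
    _ ≤ T.card := finrank_span_finset_le_card T
    _ ≤ Δ'.card := Finset.card_image_le
    _ = a * q - 1 := hcardΔ
  have : 0 < a * q := Nat.mul_pos ha (by omega)
  omega

end StmtAux

/-- For an optimal generalised `C_ab` polynomial `F = X^a + αY^b + R` (having exactly `aq`
zeros in `F_q²`), the set `{F, Y^q - Y}` is a Gröbner basis of `⟨F, X^q - X, Y^q - Y⟩` with
respect to the weighted degree lexicographic order, and the footprint is the box
`{X^i Y^j : i < a, j < q}`. -/
theorem stmt_10 (q a b : ℕ) (hq : IsPrimePow q) (F : Type*) [Field F] [Fintype F]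
    (hcard : Fintype.card F = q) (ha : 0 < a) (hab : a < b) (haq : a ≤ q)
    (wX wY : ℕ) (hwX : wX = b / Nat.gcd a b) (hwY : wY = a / Nat.gcd a b)
    (α : F) (hα : α ≠ 0)
    (R : MvPolynomial (Fin 2) F)
    (hR : ∀ μ ∈ R.support, μ 0 * wX + μ 1 * wY < a * wX)
    (Fpoly : MvPolynomial (Fin 2) F)
    (hFpoly : Fpoly = X 0 ^ a + C α * X 1 ^ b + R)
    (ord : MonomialOrder (Fin 2))
    -- `ord` is the weighted degree lexicographic ordering (ties broken by lex with Y ≺ X)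
    (hord : ∀ u v : Fin 2 →₀ ℕ, ord.toSyn u < ord.toSyn v ↔
      (u 0 * wX + u 1 * wY < v 0 * wX + v 1 * wY ∨
        (u 0 * wX + u 1 * wY = v 0 * wX + v 1 * wY ∧
          (u 0 < v 0 ∨ (u 0 = v 0 ∧ u 1 < v 1)))))
    (J : Ideal (MvPolynomial (Fin 2) F))
    (hJ : J = Ideal.span {Fpoly, X 0 ^ q - X 0, X 1 ^ q - X 1})
    (hzeros : Set.ncard {P : Fin 2 → F | eval P Fpoly = 0} = a * q) :
    (Fpoly ∈ J ∧ (X 1 ^ q - X 1 : MvPolynomial (Fin 2) F) ∈ J) ∧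
    (∀ f ∈ J, f ≠ 0 →
      lmDeg ord Fpoly ≤ lmDeg ord f ∨
      lmDeg ord (X 1 ^ q - X 1 : MvPolynomial (Fin 2) F) ≤ lmDeg ord f) ∧
    {μ : Fin 2 →₀ ℕ | ∀ f ∈ J, f ≠ 0 → lmDeg ord f ≠ μ} =
      {μ : Fin 2 →₀ ℕ | μ 0 < a ∧ μ 1 < q} := by
  classical
  -- numerical preliminaries
  have hq2 : 2 ≤ q := hq.two_le
  have hb : 0 < b := lt_trans ha hab
  have hg0 : 0 < Nat.gcd a b := Nat.gcd_pos_of_pos_left _ ha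
  have hwX0 : 0 < wX := by
    rw [hwX]; exact Nat.div_pos (Nat.le_of_dvd hb (Nat.gcd_dvd_right a b)) hg0
  have hwY0 : 0 < wY := by
    rw [hwY]; exact Nat.div_pos (Nat.le_of_dvd ha (Nat.gcd_dvd_left a b)) hg0
  have hw : a * wX = b * wY := by
    rw [hwX, hwY, ← Nat.mul_div_assoc a (Nat.gcd_dvd_right a b),
      ← Nat.mul_div_assoc b (Nat.gcd_dvd_left a b), Nat.mul_comm b a]
  -- ideal memberships
  have hFJ : Fpoly ∈ J := by
    rw [hJ]; exact Ideal.subset_span (Set.mem_insert _ _)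
  have hYJ : (X 1 ^ q - X 1 : MvPolynomial (Fin 2) F) ∈ J := by
    rw [hJ]
    exact Ideal.subset_span (Set.mem_insert_of_mem _ (Set.mem_insert_of_mem _ rfl))
  -- leading monomials of generators
  obtain ⟨hF0, lmF⟩ : Fpoly ≠ 0 ∧ lmDeg ord Fpoly = Finsupp.single 0 a := by
    rw [hFpoly]; exact StmtAux.lm_F ord hord ha hw hR
  obtain ⟨hY0, lmY⟩ := StmtAux.lm_Yq (K := F) ord hord hq2 hwY0
  -- witnesses for monomials outside the box
  have hwit : ∀ μ : Fin 2 →₀ ℕ, (a ≤ μ 0 ∨ q ≤ μ 1) →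
      ∃ g ∈ J, g ≠ 0 ∧ lmDeg ord g = μ := by
    intro μ hμ
    rcases hμ with h | h
    · refine ⟨monomial (μ - Finsupp.single 0 a) 1 * Fpoly, J.mul_mem_left _ hFJ,
        mul_ne_zero (fun h => one_ne_zero (monomial_eq_zero.mp h)) hF0, ?_⟩
      rw [StmtAux.lmDeg_monomial_mul ord hF0 _ one_ne_zero, lmF,
        tsub_add_cancel_of_le (Finsupp.single_le_iff.mpr h)]
    · refine ⟨monomial (μ - Finsupp.single 1 q) 1 * (X 1 ^ q - X 1), J.mul_mem_left _ hYJ,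
        mul_ne_zero (fun h => one_ne_zero (monomial_eq_zero.mp h)) hY0, ?_⟩
      rw [StmtAux.lmDeg_monomial_mul ord hY0 _ one_ne_zero, lmY,
        tsub_add_cancel_of_le (Finsupp.single_le_iff.mpr h)]
  -- vanishing of the ideal on the zero set
  have hvan : ∀ g ∈ J, ∀ P ∈ {P : Fin 2 → F | eval P Fpoly = 0}, eval P g = 0 := by
    intro g hg P hP
    have hle : J ≤ RingHom.ker (eval P) := by
      rw [hJ, Ideal.span_le]
      rintro x hx
      simp only [Set.mem_insert_iff, Set.mem_singleton_iff] at hx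
      rcases hx with rfl | rfl | rfl
      · exact hP
      · simp only [SetLike.mem_coe, RingHom.mem_ker, map_sub, map_pow, eval_X]
        rw [← hcard, FiniteField.pow_card, sub_self]
      · simp only [SetLike.mem_coe, RingHom.mem_ker, map_sub, map_pow, eval_X]
        rw [← hcard, FiniteField.pow_card, sub_self]
    exact hle hg
  -- the key footprint bound
  have hkey : ∀ f ∈ J, f ≠ 0 → ¬(lmDeg ord f 0 < a ∧ lmDeg ord f 1 < q) := by
    intro f hf hf0 hcon
    exact StmtAux.key hcard hq2 ha ord J hwit _ hvan hzeros hf hf0 hcon.1 hcon.2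
  refine ⟨⟨hFJ, hYJ⟩, ?_, ?_⟩
  · intro f hf hf0
    have := hkey f hf hf0
    rcases Nat.lt_or_ge (lmDeg ord f 0) a with h0 | h0
    · rcases Nat.lt_or_ge (lmDeg ord f 1) q with h1 | h1
      · exact absurd ⟨h0, h1⟩ this
      · right; rw [lmY]; exact Finsupp.single_le_iff.mpr h1
    · left; rw [lmF]; exact Finsupp.single_le_iff.mpr h0
  · ext μ
    simp only [Set.mem_setOf_eq]
    constructor
    · intro h
      rcases Nat.lt_or_ge (μ 0) a with h0 | h0
      · rcases Nat.lt_or_ge (μ 1) q with h1 | h1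
        · exact ⟨h0, h1⟩
        · obtain ⟨g, hgJ, hg0, hgl⟩ := hwit μ (Or.inr h1)
          exact absurd hgl (h g hgJ hg0)
      · obtain ⟨g, hgJ, hg0, hgl⟩ := hwit μ (Or.inl h0)
        exact absurd hgl (h g hgJ hg0)
    · intro hμ f hf hf0 heq
      exact hkey f hf hf0 (heq ▸ hμ)
end

section
/- Let U = {u_1,...,u_n}, V = {v_1,...,v_n}, W = {w_1,...,w_n} be three bases of F_q^n. For a nonzero vector c, define ρ̄_W(c) = i if c ∈ Span{w_1,...,w_i} \ Span{w_1,...,w_{i−1}}. Let c = Σ_{s=1}^t a_s u_{i_s} with a_t ≠ 0 and i_1 < ... < i_t. Suppose there exist indices j_1,...,j_σ ∈ {1,...,n} and distinct values l_1 < ... < l_σ such that for each r, ρ̄_W(u_{i_t} ∗ v_{j_r}) = l_r and for every s < t, ρ̄_W(u_{i_s} ∗ v_{j_r}) < l_r. Then the Hamming weight of c satisfies w_H(c) ≥ σ. -/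
/-- Feng–Rao style bound for primary linear codes: if `c = Σ aₛ u_{iₛ}` with `a_t ≠ 0` and
there are indices `j₁,…,j_σ` and distinct values `l₁ < … < l_σ` such that
`ρ̄_W(u_{i_t} ∗ v_{j_r}) = l_r` and `ρ̄_W(u_{i_s} ∗ v_{j_r}) < l_r` for all `s < t` (the OWB
condition), then `w_H(c) ≥ σ`. Here `ρ̄_W(x) = l` is expressed as membership of `x` in the
span of the first `l` vectors of `W` but not of the first `l - 1`, and `ρ̄_W(x) < l` as
membership in the span of the first `l - 1` vectors. -/
theorem stmt_14 (F : Type*) [Field F] [DecidableEq F] (n t σ : ℕ)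
    (u v w : Fin n → (Fin n → F))
    (hu : LinearIndependent F u) (hv : LinearIndependent F v)
    (hw : LinearIndependent F w)
    (aa : Fin (t + 1) → F) (ii : Fin (t + 1) → Fin n) (hii : StrictMono ii)
    (hat : aa (Fin.last t) ≠ 0)
    (c : Fin n → F) (hc : c = ∑ s, aa s • u (ii s))
    (j : Fin σ → Fin n) (l : Fin σ → ℕ) (hl : StrictMono l)
    (hlr : ∀ r, 1 ≤ l r ∧ l r ≤ n)
    (h1 : ∀ r, u (ii (Fin.last t)) * v (j r) ∈
        Submodule.span F (w '' {k : Fin n | (k : ℕ) < l r}) ∧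
      u (ii (Fin.last t)) * v (j r) ∉
        Submodule.span F (w '' {k : Fin n | (k : ℕ) < l r - 1}))
    (h2 : ∀ r, ∀ s : Fin (t + 1), s < Fin.last t →
      u (ii s) * v (j r) ∈ Submodule.span F (w '' {k : Fin n | (k : ℕ) < l r - 1})) :
    σ ≤ hammingNorm c := by
  classical
  set d : Fin σ → (Fin n → F) := fun r => c * v (j r) with hd
  have hexp : ∀ r, d r = ∑ s, aa s • (u (ii s) * v (j r)) := by
    intro r
    simp only [hd, hc, Finset.sum_mul, smul_mul_assoc]
  -- membership of d r in span of first (l r) vectors of w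
  have hmem : ∀ r, d r ∈ Submodule.span F (w '' {k : Fin n | (k : ℕ) < l r}) := by
    intro r
    rw [hexp]
    refine Submodule.sum_mem _ fun s _ => Submodule.smul_mem _ _ ?_
    rcases eq_or_lt_of_le (Fin.le_last s) with h | h
    · rw [h]; exact (h1 r).1
    · exact Submodule.span_mono
        (Set.image_mono fun k hk => lt_of_lt_of_le hk (Nat.sub_le _ _)) (h2 r s h)
  -- non-membership of d r in span of first (l r - 1)
  have hnmem : ∀ r, d r ∉ Submodule.span F (w '' {k : Fin n | (k : ℕ) < l r - 1}) := by
    intro r hr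
    apply (h1 r).2
    have hsum : d r = (∑ s : Fin t, aa s.castSucc • (u (ii s.castSucc) * v (j r)))
        + aa (Fin.last t) • (u (ii (Fin.last t)) * v (j r)) := by
      rw [hexp, Fin.sum_univ_castSucc]
    have hrest : (∑ s : Fin t, aa s.castSucc • (u (ii s.castSucc) * v (j r)))
        ∈ Submodule.span F (w '' {k : Fin n | (k : ℕ) < l r - 1}) :=
      Submodule.sum_mem _ fun s _ => Submodule.smul_mem _ _
        (h2 r s.castSucc (Fin.castSucc_lt_last s))
    have hlast : aa (Fin.last t) • (u (ii (Fin.last t)) * v (j r))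
        ∈ Submodule.span F (w '' {k : Fin n | (k : ℕ) < l r - 1}) := by
      have h' := Submodule.sub_mem _ hr hrest
      rwa [hsum, add_sub_cancel_left] at h'
    have h'' := Submodule.smul_mem
      (Submodule.span F (w '' {k : Fin n | (k : ℕ) < l r - 1})) (aa (Fin.last t))⁻¹ hlast
    rwa [inv_smul_smul₀ hat] at h''
  -- d is linearly independent
  have hind : LinearIndependent F d := by
    rw [Fintype.linearIndependent_iff]
    intro g hg
    by_contra hcon
    push_neg at hcon
    obtain ⟨r0, hr0⟩ := hcon
    set T := Finset.univ.filter (fun r => g r ≠ 0) with hT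
    have hTne : T.Nonempty := ⟨r0, by simp [hT, hr0]⟩
    set R := T.max' hTne with hR
    have hRT : R ∈ T := T.max'_mem hTne
    have hgR : g R ≠ 0 := (Finset.mem_filter.mp hRT).2
    apply hnmem R
    have hsum0 : ∑ r ∈ T, g r • d r = 0 := by
      rw [hT, Finset.sum_filter_of_ne, hg]
      intro r _ hne hgz
      exact hne (by rw [hgz, zero_smul])
    have hkey := Finset.sum_erase_add T (fun r => g r • d r) hRT
    rw [hsum0] at hkey
    have heq : g R • d R = - ∑ r ∈ T.erase R, g r • d r :=
      eq_neg_of_add_eq_zero_right hkey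
    have hmem' : (∑ r ∈ T.erase R, g r • d r)
        ∈ Submodule.span F (w '' {k : Fin n | (k : ℕ) < l R - 1}) := by
      refine Submodule.sum_mem _ fun r hr => ?_
      have hrR : r < R := lt_of_le_of_ne (T.le_max' r (Finset.mem_of_mem_erase hr))
        (Finset.ne_of_mem_erase hr)
      have hlle : l r ≤ l R - 1 := Nat.le_sub_one_of_lt (hl hrR)
      exact Submodule.smul_mem _ _ (Submodule.span_mono
        (Set.image_mono fun k hk => lt_of_lt_of_le hk hlle) (hmem r))
    have hgRd : g R • d R ∈ Submodule.span F (w '' {k : Fin n | (k : ℕ) < l R - 1}) := by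
      rw [heq]; exact Submodule.neg_mem _ hmem'
    have h'' := Submodule.smul_mem
      (Submodule.span F (w '' {k : Fin n | (k : ℕ) < l R - 1})) (g R)⁻¹ hgRd
    rwa [inv_smul_smul₀ hgR] at h''
  -- project onto support of c
  set π : (Fin n → F) →ₗ[F] ({i : Fin n // c i ≠ 0} → F) :=
    LinearMap.funLeft F F (fun i => i.val) with hπdef
  have hind2 : LinearIndependent F (π ∘ d) := by
    rw [Fintype.linearIndependent_iff]
    intro g hg
    apply Fintype.linearIndependent_iff.mp hind g
    have hπ : π (∑ r, g r • d r) = 0 := by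
      rw [map_sum]
      simpa using hg
    funext i
    by_cases hci : c i = 0
    · simp [hd, hci, Finset.sum_apply]
    · have h' := congrFun hπ ⟨i, hci⟩
      simpa [hπdef, LinearMap.funLeft] using h'
  have hcard := hind2.fintype_card_le_finrank
  calc σ = Fintype.card (Fin σ) := (Fintype.card_fin σ).symm
    _ ≤ Module.finrank F ({i : Fin n // c i ≠ 0} → F) := hcard
    _ = Fintype.card {i : Fin n // c i ≠ 0} := Module.finrank_fintype_fun_eq_card F
    _ = hammingNorm c := by simp [hammingNorm, Fintype.card_subtype]
end
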